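/- Let q and q′ be elements of finite order in Houghton's group H_n. Then q and q′ are conjugate in H_n if and only if they are conjugate in the full symmetric group Sym(S) of the set S = ℕ × {1,…,n} (equivalently, if and only if they have the same cycle type, i.e., the same number of disjoint cycles of each length m ≥ 2). -/

import Mathlib

/-- `f : ℕ × Fin n → ℕ × Fin n` is eventually a translation with translation
vector `m : Fin n → ℤ`: on each ray `ℕ × {x}`, for all sufficiently large `i`,
`f` sends `(i, x)` to `(i + m x, x)`. -/
def EvTrans (n : ℕ) (f : ℕ × Fin n → ℕ × Fin n) (m : Fin n → ℤ) : Prop :=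
  ∀ x : Fin n, ∃ z : ℕ, ∀ i : ℕ, z ≤ i →
    (f (i, x)).2 = x ∧ ((f (i, x)).1 : ℤ) = (i : ℤ) + m x

/-- Houghton's group `H_n`: the subgroup of the symmetric group on
`S = ℕ × Fin n` consisting of the permutations that are eventually
translations on each ray. -/
def Houghton (n : ℕ) : Subgroup (Equiv.Perm (ℕ × Fin n)) where
  carrier := {f : Equiv.Perm (ℕ × Fin n) | ∃ m : Fin n → ℤ, EvTrans n (⇑f) m}
  one_mem' := ⟨0, fun x => ⟨0, fun i _ => by simp⟩⟩
  mul_mem' := by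
    rintro a b ⟨ma, hA⟩ ⟨mb, hB⟩
    refine ⟨ma + mb, fun x => ?_⟩
    obtain ⟨za, hza⟩ := hA x
    obtain ⟨zb, hzb⟩ := hB x
    refine ⟨max zb ((za : ℤ) - mb x).toNat, fun i hi => ?_⟩
    have hib : zb ≤ i := le_trans (le_max_left _ _) hi
    obtain ⟨h2, h1⟩ := hzb i hib
    have hbx : (⇑b) (i, x) = ((b (i, x)).1, x) := Prod.ext_iff.mpr ⟨rfl, h2⟩
    have hk : za ≤ (b (i, x)).1 := by
      have h3 : ((za : ℤ) - mb x) ≤ (i : ℤ) := by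
        calc ((za : ℤ) - mb x) ≤ (((za : ℤ) - mb x).toNat : ℤ) := Int.self_le_toNat _
          _ ≤ (i : ℤ) := by exact_mod_cast le_trans (le_max_right _ _) hi
      have h4 : (za : ℤ) ≤ ((b (i, x)).1 : ℤ) := by rw [h1]; linarith
      exact_mod_cast h4
    obtain ⟨h4, h5⟩ := hza (b (i, x)).1 hk
    constructor
    · show ((a * b) (i, x)).2 = x
      rw [Equiv.Perm.mul_apply, hbx]
      exact h4
    · show (((a * b) (i, x)).1 : ℤ) = (i : ℤ) + (ma + mb) x
      rw [Equiv.Perm.mul_apply, hbx, h5, h1, Pi.add_apply]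
      ring
  inv_mem' := by
    rintro a ⟨m, hm⟩
    refine ⟨-m, fun x => ?_⟩
    obtain ⟨z, hz⟩ := hm x
    refine ⟨((z : ℤ) + m x).toNat, fun i hi => ?_⟩
    have h1 : (z : ℤ) + m x ≤ (i : ℤ) :=
      le_trans (Int.self_le_toNat _) (by exact_mod_cast hi)
    have h0 : (0 : ℤ) ≤ (i : ℤ) - m x := by
      have hz0 : (0 : ℤ) ≤ (z : ℤ) := Int.natCast_nonneg z
      linarith
    set j := ((i : ℤ) - m x).toNat with hjdef
    have hj' : (j : ℤ) = (i : ℤ) - m x := Int.toNat_of_nonneg h0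
    have hjz : z ≤ j := by
      have : (z : ℤ) ≤ (j : ℤ) := by rw [hj']; linarith
      exact_mod_cast this
    obtain ⟨h2, h3⟩ := hz j hjz
    have hfst : (a (j, x)).1 = i := by
      have : ((a (j, x)).1 : ℤ) = (i : ℤ) := by rw [h3, hj']; ring
      exact_mod_cast this
    have hfix : (⇑a) (j, x) = (i, x) := Prod.ext_iff.mpr ⟨hfst, h2⟩
    have hinv : (⇑a⁻¹) (i, x) = (j, x) := by
      rw [← hfix]
      exact Equiv.symm_apply_apply a (j, x)
    constructor
    · rw [hinv]
    · rw [hinv]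
      show (j : ℤ) = (i : ℤ) + (-m) x
      rw [hj', Pi.neg_apply]
      ring

/-- A finitely supported permutation lies in Houghton's group. -/
lemma finsupp_mem_houghton (n : ℕ) (h : Equiv.Perm (ℕ × Fin n)) (F : Finset (ℕ × Fin n))
    (hF : ∀ s ∉ F, h s = s) : h ∈ Houghton n := by
  refine ⟨0, fun x => ⟨(F.sup Prod.fst) + 1, fun i hi => ?_⟩⟩
  have hnotF : (i, x) ∉ F := by
    intro hc
    have := Finset.le_sup (f := Prod.fst) hc
    simp only at this
    omega
  rw [hF _ hnotF]
  simp

/-- A finite-order element of Houghton's group has finite support. -/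
lemma finite_support_of_finOrder (n : ℕ) (q : Equiv.Perm (ℕ × Fin n))
    (hq : q ∈ Houghton n) (hord : IsOfFinOrder q) :
    ∃ F : Finset (ℕ × Fin n), ∀ s ∉ F, q s = s := by
  obtain ⟨m, hm⟩ := hq
  set k := orderOf q with hkdef
  have hk : 0 < k := hord.orderOf_pos
  have hqk : q ^ k = 1 := pow_orderOf_eq_one q
  have hm0 : ∀ x, m x = 0 := by
    intro x
    obtain ⟨z, hz⟩ := hm x
    set i := z + k * (m x).natAbs with hidef
    have key : ∀ j, j ≤ k →
        ∃ p : ℕ, (q ^ j) (i, x) = (p, x) ∧ (p : ℤ) = (i : ℤ) + j * m x := by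
      intro j hj
      induction j with
      | zero => exact ⟨i, by simp⟩
      | succ j ihj =>
        obtain ⟨p, hp1, hp2⟩ := ihj (Nat.le_of_succ_le hj)
        have hzp : z ≤ p := by
          have habs : |(j : ℤ) * m x| ≤ (k : ℤ) * (m x).natAbs := by
            rw [abs_mul, Int.abs_natCast, Int.abs_eq_natAbs]
            have hjk : (j : ℤ) ≤ (k : ℤ) := by exact_mod_cast Nat.le_of_succ_le hj
            exact mul_le_mul hjk le_rfl (by positivity) (by positivity)
          have h1 : -((k : ℤ) * (m x).natAbs) ≤ (j : ℤ) * m x := by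
            have := neg_abs_le ((j : ℤ) * m x)
            linarith
          have h2 : (z : ℤ) ≤ (p : ℤ) := by
            rw [hp2]
            have : (i : ℤ) = (z : ℤ) + (k : ℤ) * (m x).natAbs := by
              rw [hidef]; push_cast; ring
            linarith
          exact_mod_cast h2
        obtain ⟨h2, h1⟩ := hz p hzp
        refine ⟨(q (p, x)).1, ?_, ?_⟩
        · rw [pow_succ', Equiv.Perm.mul_apply, hp1]
          exact Prod.ext_iff.mpr ⟨rfl, h2⟩
        · rw [h1, hp2]; push_cast; ring
    obtain ⟨p, hp1, hp2⟩ := key k le_rfl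
    rw [hqk] at hp1
    have hpi : p = i := by
      have : ((i : ℕ), x) = (p, x) := hp1
      exact (Prod.ext_iff.mp this).1.symm
    rw [hpi] at hp2
    have : (k : ℤ) * m x = 0 := by linarith
    rcases mul_eq_zero.mp this with h | h
    · exfalso
      have hk0 : (k : ℤ) ≠ 0 := by exact_mod_cast hk.ne'
      exact hk0 h
    · exact h
  choose zf hzf using hm
  refine ⟨Finset.range (Finset.univ.sup zf + 1) ×ˢ Finset.univ, ?_⟩
  rintro ⟨i, x⟩ hs
  have hi : zf x ≤ i := by
    by_contra hlt
    push_neg at hlt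
    apply hs
    rw [Finset.mem_product]
    refine ⟨Finset.mem_range.mpr ?_, Finset.mem_univ x⟩
    have : zf x ≤ Finset.univ.sup zf := Finset.le_sup (Finset.mem_univ x)
    omega
  obtain ⟨h2, h1⟩ := hzf x i hi
  rw [hm0 x] at h1
  have hfst : (q (i, x)).1 = i := by
    have hfz : ((q (i, x)).1 : ℤ) = (i : ℤ) := by rw [h1]; ring
    exact_mod_cast hfz
  exact Prod.ext_iff.mpr ⟨hfst, h2⟩

/-- Any permutation can be modified to a finitely supported one agreeing
with it on a given finite set. -/
lemma exists_finsupp_extend {α : Type*} [DecidableEq α] (c : Equiv.Perm α) (A : Finset α) :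
    ∃ h : Equiv.Perm α, (∀ a ∈ A, h a = c a) ∧ ∀ s ∉ A ∪ A.image c, h s = s := by
  classical
  induction A using Finset.induction with
  | empty => exact ⟨1, by simp, by simp⟩
  | @insert a A ha ih =>
    obtain ⟨h, h1, h2⟩ := ih
    refine ⟨Equiv.swap (c a) (h a) * h, ?_, ?_⟩
    · intro b hb
      rcases Finset.mem_insert.mp hb with rfl | hbA
      · show Equiv.swap (c b) (h b) (h b) = c b
        exact Equiv.swap_apply_right _ _
      · have hba : b ≠ a := fun hba => ha (hba ▸ hbA)
        show Equiv.swap (c a) (h a) (h b) = c b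
        rw [h1 b hbA]
        refine Equiv.swap_apply_of_ne_of_ne (c.injective.ne hba) ?_
        rw [← h1 b hbA]
        exact h.injective.ne hba
    · intro s hs
      have hsub : A ∪ A.image c ⊆ insert a A ∪ (insert a A).image c :=
        Finset.union_subset_union (Finset.subset_insert a A)
          (Finset.image_subset_image (Finset.subset_insert a A))
      have hs' : s ∉ A ∪ A.image c := fun hmem => hs (hsub hmem)
      show Equiv.swap (c a) (h a) (h s) = s
      rw [h2 s hs']
      have hsca : s ≠ c a := by
        rintro rfl
        exact hs (Finset.mem_union_right _
          (Finset.mem_image_of_mem c (Finset.mem_insert_self a A)))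
      have hsha : s ≠ h a := by
        by_cases haU : a ∈ A ∪ A.image c
        · -- then h a ∈ A ∪ A.image c
          have hhaU : h a ∈ A ∪ A.image c := by
            by_contra hno
            have := h2 (h a) hno
            have : h a = a := h.injective this
            rw [this] at hno
            exact hno haU
          rintro rfl
          exact hs (hsub hhaU)
        · rw [h2 a haU]
          rintro rfl
          exact hs (Finset.mem_union_left _ (Finset.mem_insert_self _ _))
      exact Equiv.swap_apply_of_ne_of_ne hsca hsha

/-- Two finite-order elements `q, q'` of Houghton's group
`H_n` are conjugate in `H_n` if and only if they are conjugate in the full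
symmetric group of `S = ℕ × Fin n` (equivalently, iff they have the same
cycle type). -/
theorem houghton_conj_iff_conj_in_symmetric_group (n : ℕ) (hn : 1 ≤ n)
    (q q' : Equiv.Perm (ℕ × Fin n)) (hq : q ∈ Houghton n)
    (hq' : q' ∈ Houghton n) (hord : IsOfFinOrder q) (hord' : IsOfFinOrder q') :
    (∃ h ∈ Houghton n, h * q * h⁻¹ = q') ↔ IsConj q q' := by
  constructor
  · rintro ⟨h, _, hconj⟩
    exact isConj_iff.mpr ⟨h, hconj⟩
  · intro hcj
    obtain ⟨c, hc⟩ := isConj_iff.mp hcj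
    have hc' : c * q = q' * c := mul_inv_eq_iff_eq_mul.mp hc
    obtain ⟨F, hF⟩ := finite_support_of_finOrder n q hq hord
    obtain ⟨h, h1, h2⟩ := exists_finsupp_extend c F
    refine ⟨h, finsupp_mem_houghton n h (F ∪ F.image c) h2, ?_⟩
    have hcq : ∀ t, c (q t) = q' (c t) := fun t => by
      rw [← Equiv.Perm.mul_apply, hc', Equiv.Perm.mul_apply]
    have key : ∀ t, h (q t) = q' (h t) := by
      intro t
      by_cases ht : q t = t
      · rw [ht]
        by_contra hne
        have hne' : q' (h t) ≠ h t := fun hfix => hne (by rw [hfix])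
        -- u := c⁻¹ (h t) is in the support of q, hence in F
        set u := c⁻¹ (h t) with hudef
        have hcu : c u = h t := Equiv.apply_symm_apply c (h t)
        have hqu : q u ≠ u := by
          intro hqu
          apply hne'
          have := hcq u
          rw [hqu, hcu] at this
          exact this.symm
        have huF : u ∈ F := by
          by_contra huF
          exact hqu (hF u huF)
        have : h u = h t := by rw [h1 u huF, hcu]
        have hut : u = t := h.injective this
        rw [hut] at hqu
        exact hqu ht
      · -- t and q t are in the support of q, hence in F
        have htF : t ∈ F := by
          by_contra htF
          exact ht (hF t htF)
        have hqtF : q t ∈ F := by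
          by_contra hqtF
          have := hF (q t) hqtF
          exact ht (q.injective this)
        rw [h1 t htF, h1 (q t) hqtF]
        exact hcq t
    exact mul_inv_eq_iff_eq_mul.mpr (Equiv.ext key)
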